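/- Suppose for all states x and actions a, |Q(x,a) − Q̂(x,a)| ≤ e_Q, ∑_a |r(x,a) − r̂(x,a)| ≤ e_R, and ∑_{x'} |T(x'|x,a) − T̂(x'|x,a)| ≤ e_T, with rewards in [0,1] and discount γ ∈ [0,1). For any rollout policy π_r, any start state x, and rollout depth H ≥ 1, the model-based estimated return ξ_p(π_r, x) = E_{π_r, T̂, r̂}[∑_{h=0}^{H−1} γ^h r̂_h + γ^H max_a Q̂(x_H, a) | x] and the true-model quantity ξ(π_r, x) = E_{π_r, T, r}[∑_{h=0}^{H−1} γ^h r_h + γ^H max_a Q(x_H, a) | x] satisfy |ξ_p(π_r, x) − ξ(π_r, x)| ≤ (1 − γ^H + H γ^H (1−γ))/(1−γ)^2 · e_T + (1 − γ^H)/(1−γ) · e_R + γ^H · e_Q. -/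

import Mathlib

/-- Expected `H`-step bootstrapped return from `x0` under stochastic policy `π`,
transition kernel `T`, mean reward `r`, with `max_a Q` evaluated at the final state. -/
noncomputable def gatsReturn {X A : Type*} [Fintype X] [Fintype A] [Nonempty A]
    (T : X → A → X → ℝ) (r : X → A → ℝ) (Q : X → A → ℝ) (π : X → A → ℝ)
    (γ : ℝ) (H : ℕ) (x0 : X) : ℝ :=
  ∑ traj : (Fin H → A) × (Fin H → X),
    (∏ j : Fin H,
        π (if h : (j : ℕ) = 0 then x0
            else traj.2 ⟨(j : ℕ) - 1, lt_of_le_of_lt (Nat.sub_le _ _) j.isLt⟩) (traj.1 j) *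
          T (if h : (j : ℕ) = 0 then x0
              else traj.2 ⟨(j : ℕ) - 1, lt_of_le_of_lt (Nat.sub_le _ _) j.isLt⟩) (traj.1 j)
            (traj.2 j)) *
      ((∑ j : Fin H,
          γ ^ (j : ℕ) *
            r (if h : (j : ℕ) = 0 then x0
                else traj.2 ⟨(j : ℕ) - 1, lt_of_le_of_lt (Nat.sub_le _ _) j.isLt⟩)
              (traj.1 j)) +
        γ ^ H *
          Finset.univ.sup' Finset.univ_nonempty
            (Q (if h : H = 0 then x0
                else traj.2 ⟨H - 1, Nat.sub_lt (Nat.pos_of_ne_zero h) one_pos⟩)))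

namespace GatsAux

variable {X A : Type*} [Fintype X] [Fintype A] [Nonempty A]

def prevS {H : ℕ} (x0 : X) (xs : Fin H → X) (j : Fin H) : X :=
  if _ : (j : ℕ) = 0 then x0 else xs ⟨(j : ℕ) - 1, lt_of_le_of_lt (Nat.sub_le _ _) j.isLt⟩

def lastS (H : ℕ) (x0 : X) (xs : Fin H → X) : X :=
  if h : H = 0 then x0 else xs ⟨H - 1, Nat.sub_lt (Nat.pos_of_ne_zero h) one_pos⟩

lemma gatsReturn_def (T : X → A → X → ℝ) (r Q : X → A → ℝ) (π : X → A → ℝ)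
    (γ : ℝ) (H : ℕ) (x0 : X) :
    gatsReturn T r Q π γ H x0 =
      ∑ traj : (Fin H → A) × (Fin H → X),
        (∏ j : Fin H, π (prevS x0 traj.2 j) (traj.1 j) *
            T (prevS x0 traj.2 j) (traj.1 j) (traj.2 j)) *
          ((∑ j : Fin H, γ ^ (j : ℕ) * r (prevS x0 traj.2 j) (traj.1 j)) +
            γ ^ H * Finset.univ.sup' Finset.univ_nonempty (Q (lastS H x0 traj.2))) := rfl

lemma prevS_zero {n : ℕ} (x0 : X) (xs : Fin (n+1) → X) : prevS x0 xs 0 = x0 := rfl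

lemma cons_eval {n : ℕ} (x1 : X) (xs : Fin n → X) (i : Fin (n+1)) :
    (Fin.cons x1 xs : Fin (n+1) → X) i = if h : (i : ℕ) = 0 then x1
      else xs ⟨(i : ℕ) - 1, by omega⟩ := by
  rcases i with ⟨iv, hi⟩
  cases iv with
  | zero => simp
  | succ k =>
    have h1 : (⟨k+1, hi⟩ : Fin (n+1)) = (⟨k, by omega⟩ : Fin n).succ := rfl
    rw [h1, Fin.cons_succ]
    simp

lemma prevS_succ {n : ℕ} (x0 x1 : X) (xs : Fin n → X) (j : Fin n) :
    prevS x0 (Fin.cons x1 xs) j.succ = prevS x1 xs j := by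
  simp only [prevS, Fin.val_succ, Nat.succ_ne_zero, dif_neg, not_false_iff, dite_false,
    cons_eval, Nat.add_sub_cancel]

lemma lastS_cons {n : ℕ} (x0 x1 : X) (xs : Fin n → X) :
    lastS (n+1) x0 (Fin.cons x1 xs) = lastS n x1 xs := by
  simp only [lastS, Nat.succ_ne_zero, dif_neg, not_false_iff, dite_false, cons_eval,
    Nat.add_sub_cancel]

lemma sum_traj_succ {n : ℕ} (F : ((Fin (n+1) → A) × (Fin (n+1) → X)) → ℝ) :
    ∑ traj : (Fin (n+1) → A) × (Fin (n+1) → X), F traj =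
      ∑ a : A, ∑ x1 : X, ∑ traj : (Fin n → A) × (Fin n → X),
        F (Fin.cons a traj.1, Fin.cons x1 traj.2) := by
  rw [← Equiv.sum_comp ((Fin.consEquiv fun _ => A).prodCongr (Fin.consEquiv fun _ => X)) F]
  simp only [Fintype.sum_prod_type, Equiv.prodCongr_apply, Fin.consEquiv_apply, Prod.map]
  exact Finset.sum_congr rfl fun a _ => Finset.sum_comm

noncomputable def Vrec (T : X → A → X → ℝ) (r : X → A → ℝ) (Q : X → A → ℝ)
    (π : X → A → ℝ) (γ : ℝ) : ℕ → X → ℝ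
  | 0, x => Finset.univ.sup' Finset.univ_nonempty (Q x)
  | n+1, x => ∑ a, π x a * (r x a + γ * ∑ x', T x a x' * Vrec T r Q π γ n x')

variable (T : X → A → X → ℝ) (r Q : X → A → ℝ) (π : X → A → ℝ) (γ : ℝ)

lemma weight_sum (hT1 : ∀ x a, ∑ x', T x a x' = 1) (hπ1 : ∀ x, ∑ a, π x a = 1) :
    ∀ (n : ℕ) (x0 : X),
      ∑ traj : (Fin n → A) × (Fin n → X),
        (∏ j : Fin n, π (prevS x0 traj.2 j) (traj.1 j) *
          T (prevS x0 traj.2 j) (traj.1 j) (traj.2 j)) = 1 := by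
  intro n
  induction n with
  | zero => intro x0; simp
  | succ m ih =>
    intro x0
    rw [sum_traj_succ]
    have key : ∀ a x1,
        ∑ traj : (Fin m → A) × (Fin m → X),
          (∏ j : Fin (m+1),
            π (prevS x0 (Fin.cons x1 traj.2) j) ((Fin.cons a traj.1 : Fin (m+1) → A) j) *
            T (prevS x0 (Fin.cons x1 traj.2) j) ((Fin.cons a traj.1 : Fin (m+1) → A) j)
              ((Fin.cons x1 traj.2 : Fin (m+1) → X) j)) = π x0 a * T x0 a x1 := by
      intro a x1
      have hprod : ∀ traj : (Fin m → A) × (Fin m → X),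
          (∏ j : Fin (m+1),
            π (prevS x0 (Fin.cons x1 traj.2) j) ((Fin.cons a traj.1 : Fin (m+1) → A) j) *
            T (prevS x0 (Fin.cons x1 traj.2) j) ((Fin.cons a traj.1 : Fin (m+1) → A) j)
              ((Fin.cons x1 traj.2 : Fin (m+1) → X) j)) =
          π x0 a * T x0 a x1 *
            ∏ j : Fin m, π (prevS x1 traj.2 j) (traj.1 j) *
              T (prevS x1 traj.2 j) (traj.1 j) (traj.2 j) := by
        intro traj
        rw [Fin.prod_univ_succ]
        simp only [Fin.cons_zero, Fin.cons_succ, prevS_succ, prevS_zero]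
      simp only [hprod, ← Finset.mul_sum, ih x1, mul_one]
    calc ∑ a, ∑ x1, ∑ traj : (Fin m → A) × (Fin m → X),
          (∏ j : Fin (m+1),
            π (prevS x0 (Fin.cons x1 traj.2) j) ((Fin.cons a traj.1 : Fin (m+1) → A) j) *
            T (prevS x0 (Fin.cons x1 traj.2) j) ((Fin.cons a traj.1 : Fin (m+1) → A) j)
              ((Fin.cons x1 traj.2 : Fin (m+1) → X) j))
        = ∑ a, ∑ x1, π x0 a * T x0 a x1 := by
          exact Finset.sum_congr rfl fun a _ => Finset.sum_congr rfl fun x1 _ => key a x1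
      _ = 1 := by
          simp only [← Finset.mul_sum, hT1]
          simp [hπ1]

lemma gats_eq_Vrec (hT1 : ∀ x a, ∑ x', T x a x' = 1) (hπ1 : ∀ x, ∑ a, π x a = 1) :
    ∀ (n : ℕ) (x0 : X), gatsReturn T r Q π γ n x0 = Vrec T r Q π γ n x0 := by
  intro n
  induction n with
  | zero =>
    intro x0
    rw [gatsReturn_def]
    simp [Vrec, lastS]
  | succ m ih =>
    intro x0
    rw [gatsReturn_def, sum_traj_succ]
    have key : ∀ a x1,
        (∑ traj : (Fin m → A) × (Fin m → X),
          (∏ j : Fin (m+1),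
            π (prevS x0 (Fin.cons x1 traj.2) j) ((Fin.cons a traj.1 : Fin (m+1) → A) j) *
            T (prevS x0 (Fin.cons x1 traj.2) j) ((Fin.cons a traj.1 : Fin (m+1) → A) j)
              ((Fin.cons x1 traj.2 : Fin (m+1) → X) j)) *
          ((∑ j : Fin (m+1), γ ^ (j : ℕ) *
              r (prevS x0 (Fin.cons x1 traj.2) j) ((Fin.cons a traj.1 : Fin (m+1) → A) j)) +
            γ ^ (m+1) * Finset.univ.sup' Finset.univ_nonempty
              (Q (lastS (m+1) x0 (Fin.cons x1 traj.2))))) =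
        π x0 a * T x0 a x1 * (r x0 a + γ * gatsReturn T r Q π γ m x1) := by
      intro a x1
      have step : ∀ traj : (Fin m → A) × (Fin m → X),
          (∏ j : Fin (m+1),
            π (prevS x0 (Fin.cons x1 traj.2) j) ((Fin.cons a traj.1 : Fin (m+1) → A) j) *
            T (prevS x0 (Fin.cons x1 traj.2) j) ((Fin.cons a traj.1 : Fin (m+1) → A) j)
              ((Fin.cons x1 traj.2 : Fin (m+1) → X) j)) *
          ((∑ j : Fin (m+1), γ ^ (j : ℕ) *
              r (prevS x0 (Fin.cons x1 traj.2) j) ((Fin.cons a traj.1 : Fin (m+1) → A) j)) +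
            γ ^ (m+1) * Finset.univ.sup' Finset.univ_nonempty
              (Q (lastS (m+1) x0 (Fin.cons x1 traj.2)))) =
          π x0 a * T x0 a x1 *
            ((∏ j : Fin m, π (prevS x1 traj.2 j) (traj.1 j) *
                T (prevS x1 traj.2 j) (traj.1 j) (traj.2 j)) * r x0 a +
             γ * ((∏ j : Fin m, π (prevS x1 traj.2 j) (traj.1 j) *
                T (prevS x1 traj.2 j) (traj.1 j) (traj.2 j)) *
              ((∑ j : Fin m, γ ^ (j : ℕ) * r (prevS x1 traj.2 j) (traj.1 j)) +
                γ ^ m * Finset.univ.sup' Finset.univ_nonempty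
                  (Q (lastS m x1 traj.2))))) := by
        intro traj
        rw [Fin.prod_univ_succ, Fin.sum_univ_succ, lastS_cons]
        simp only [Fin.cons_zero, Fin.cons_succ, prevS_succ, prevS_zero, Fin.val_succ,
          Fin.val_zero, pow_zero, pow_succ]
        rw [show (∑ j : Fin m, γ ^ (j : ℕ) * γ * r (prevS x1 traj.2 j) (traj.1 j)) =
            γ * ∑ j : Fin m, γ ^ (j : ℕ) * r (prevS x1 traj.2 j) (traj.1 j) by
          rw [Finset.mul_sum]; exact Finset.sum_congr rfl fun j _ => by ring]
        ring
      rw [Finset.sum_congr rfl fun traj _ => step traj]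
      rw [← Finset.mul_sum, Finset.sum_add_distrib, ← Finset.sum_mul, weight_sum T π hT1 hπ1 m x1,
        one_mul, ← Finset.mul_sum, gatsReturn_def]
    rw [Finset.sum_congr rfl fun a _ => Finset.sum_congr rfl fun x1 _ => key a x1]
    have : ∀ a, ∑ x1, π x0 a * T x0 a x1 * (r x0 a + γ * gatsReturn T r Q π γ m x1) =
        π x0 a * (r x0 a + γ * ∑ x1, T x0 a x1 * Vrec T r Q π γ m x1) := by
      intro a
      simp only [ih, mul_add, Finset.sum_add_distrib, ← Finset.sum_mul, ← Finset.mul_sum, hT1]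
      rw [show (∑ x1 : X, π x0 a * T x0 a x1 * (γ * Vrec T r Q π γ m x1)) =
          π x0 a * (γ * ∑ x1 : X, T x0 a x1 * Vrec T r Q π γ m x1) by
        rw [Finset.mul_sum, Finset.mul_sum]
        exact Finset.sum_congr rfl fun x1 _ => by ring]
      ring
    rw [Finset.sum_congr rfl fun a _ => this a]
    rfl

lemma Vrec_bounds (hγ0 : 0 ≤ γ) (hγ1 : γ < 1)
    (hT0 : ∀ x a x', 0 ≤ T x a x') (hT1 : ∀ x a, ∑ x', T x a x' = 1)
    (hr : ∀ x a, 0 ≤ r x a ∧ r x a ≤ 1)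
    (hQ : ∀ x a, 0 ≤ Q x a ∧ Q x a ≤ 1 / (1 - γ))
    (hπ0 : ∀ x a, 0 ≤ π x a) (hπ1 : ∀ x, ∑ a, π x a = 1) :
    ∀ n x, 0 ≤ Vrec T r Q π γ n x ∧ Vrec T r Q π γ n x ≤ 1 / (1 - γ) := by
  have h1γ : (0:ℝ) < 1 - γ := by linarith
  intro n
  induction n with
  | zero =>
    intro x
    constructor
    · exact le_trans (hQ x (Classical.arbitrary A)).1
        (Finset.le_sup' (Q x) (Finset.mem_univ _))
    · exact Finset.sup'_le _ _ fun a _ => (hQ x a).2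
  | succ m ih =>
    intro x
    have hterm : ∀ a, 0 ≤ r x a + γ * ∑ x', T x a x' * Vrec T r Q π γ m x' ∧
        r x a + γ * ∑ x', T x a x' * Vrec T r Q π γ m x' ≤ 1 / (1 - γ) := by
      intro a
      have hs0 : 0 ≤ ∑ x', T x a x' * Vrec T r Q π γ m x' :=
        Finset.sum_nonneg fun x' _ => mul_nonneg (hT0 x a x') (ih x').1
      have hs1 : ∑ x', T x a x' * Vrec T r Q π γ m x' ≤ 1 / (1 - γ) := by
        calc ∑ x', T x a x' * Vrec T r Q π γ m x'
            ≤ ∑ x', T x a x' * (1 / (1 - γ)) :=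
              Finset.sum_le_sum fun x' _ =>
                mul_le_mul_of_nonneg_left (ih x').2 (hT0 x a x')
          _ = 1 / (1 - γ) := by rw [← Finset.sum_mul, hT1, one_mul]
      constructor
      · exact add_nonneg (hr x a).1 (mul_nonneg hγ0 hs0)
      · calc r x a + γ * ∑ x', T x a x' * Vrec T r Q π γ m x'
            ≤ 1 + γ * (1 / (1 - γ)) := by
              have := mul_le_mul_of_nonneg_left hs1 hγ0
              linarith [(hr x a).2]
          _ = 1 / (1 - γ) := by field_simp; ring
    constructor
    · exact Finset.sum_nonneg fun a _ => mul_nonneg (hπ0 x a) (hterm a).1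
    · calc Vrec T r Q π γ (m+1) x
          = ∑ a, π x a * (r x a + γ * ∑ x', T x a x' * Vrec T r Q π γ m x') := rfl
        _ ≤ ∑ a, π x a * (1 / (1 - γ)) :=
            Finset.sum_le_sum fun a _ =>
              mul_le_mul_of_nonneg_left (hterm a).2 (hπ0 x a)
        _ = 1 / (1 - γ) := by rw [← Finset.sum_mul, hπ1, one_mul]

variable (That : X → A → X → ℝ) (rhat Qhat : X → A → ℝ) (eT eR eQ : ℝ)

lemma Vrec_err (hγ0 : 0 ≤ γ) (hγ1 : γ < 1)
    (heT : 0 ≤ eT) (heR : 0 ≤ eR) (heQ : 0 ≤ eQ)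
    (hT0 : ∀ x a x', 0 ≤ T x a x') (hT1 : ∀ x a, ∑ x', T x a x' = 1)
    (hThat0 : ∀ x a x', 0 ≤ That x a x') (hThat1 : ∀ x a, ∑ x', That x a x' = 1)
    (hr : ∀ x a, 0 ≤ r x a ∧ r x a ≤ 1)
    (hQ : ∀ x a, 0 ≤ Q x a ∧ Q x a ≤ 1 / (1 - γ))
    (herrQ : ∀ x a, |Q x a - Qhat x a| ≤ eQ)
    (herrR : ∀ x : X, ∑ a, |r x a - rhat x a| ≤ eR)
    (herrT : ∀ x a, ∑ x', |T x a x' - That x a x'| ≤ eT)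
    (hπ0 : ∀ x a, 0 ≤ π x a) (hπ1 : ∀ x, ∑ a, π x a = 1) :
    ∀ n x, |Vrec That rhat Qhat π γ n x - Vrec T r Q π γ n x| ≤
      (1 - γ ^ n) / (1 - γ) * (eR + γ / (1 - γ) * eT) + γ ^ n * eQ := by
  have h1γ : (0:ℝ) < 1 - γ := by linarith
  intro n
  induction n with
  | zero =>
    intro x
    simp only [Vrec, pow_zero, sub_self, zero_div, zero_mul, zero_add, one_mul]
    rw [abs_sub_le_iff]
    constructor
    · apply sub_le_iff_le_add.mpr
      apply Finset.sup'_le _ _ fun a _ => ?_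
      calc Qhat x a ≤ Q x a + eQ := by
            have := herrQ x a; rw [abs_le] at this; linarith [this.2]
        _ ≤ Finset.univ.sup' Finset.univ_nonempty (Q x) + eQ := by
            linarith [Finset.le_sup' (Q x) (Finset.mem_univ a)]
        _ = eQ + Finset.univ.sup' Finset.univ_nonempty (Q x) := add_comm _ _
    · apply sub_le_iff_le_add.mpr
      apply Finset.sup'_le _ _ fun a _ => ?_
      calc Q x a ≤ Qhat x a + eQ := by
            have := herrQ x a; rw [abs_le] at this; linarith [this.1]
        _ ≤ Finset.univ.sup' Finset.univ_nonempty (Qhat x) + eQ := by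
            linarith [Finset.le_sup' (Qhat x) (Finset.mem_univ a)]
        _ = eQ + Finset.univ.sup' Finset.univ_nonempty (Qhat x) := add_comm _ _
  | succ m ih =>
    intro x
    set Bm : ℝ := (1 - γ ^ m) / (1 - γ) * (eR + γ / (1 - γ) * eT) + γ ^ m * eQ with hBm
    have hBm0 : 0 ≤ Bm := by
      apply add_nonneg
      · apply mul_nonneg
        · apply div_nonneg _ (le_of_lt h1γ)
          have : γ ^ m ≤ 1 := pow_le_one₀ hγ0 (le_of_lt hγ1)
          linarith
        · exact add_nonneg heR (mul_nonneg (div_nonneg hγ0 (le_of_lt h1γ)) heT)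
      · exact mul_nonneg (pow_nonneg hγ0 m) heQ
    have hVb := Vrec_bounds T r Q π γ hγ0 hγ1 hT0 hT1 hr hQ hπ0 hπ1 m
    have hdiff : Vrec That rhat Qhat π γ (m+1) x - Vrec T r Q π γ (m+1) x =
        ∑ a, π x a * ((rhat x a - r x a) +
          γ * ((∑ x', (That x a x' - T x a x') * Vrec T r Q π γ m x') +
            ∑ x', That x a x' *
              (Vrec That rhat Qhat π γ m x' - Vrec T r Q π γ m x'))) := by
      show (∑ a, π x a * (rhat x a + γ * ∑ x', That x a x' * Vrec That rhat Qhat π γ m x')) -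
        (∑ a, π x a * (r x a + γ * ∑ x', T x a x' * Vrec T r Q π γ m x')) = _
      rw [← Finset.sum_sub_distrib]
      refine Finset.sum_congr rfl fun a _ => ?_
      rw [show (∑ x', (That x a x' - T x a x') * Vrec T r Q π γ m x') +
          ∑ x', That x a x' * (Vrec That rhat Qhat π γ m x' - Vrec T r Q π γ m x') =
          (∑ x', That x a x' * Vrec That rhat Qhat π γ m x') -
            ∑ x', T x a x' * Vrec T r Q π γ m x' by
        rw [← Finset.sum_add_distrib, ← Finset.sum_sub_distrib]
        exact Finset.sum_congr rfl fun x' _ => by ring]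
      ring
    have hinner : ∀ a, |(∑ x', (That x a x' - T x a x') * Vrec T r Q π γ m x') +
        ∑ x', That x a x' * (Vrec That rhat Qhat π γ m x' - Vrec T r Q π γ m x')| ≤
        eT * (1 / (1 - γ)) + Bm := by
      intro a
      refine le_trans (abs_add_le _ _) (add_le_add ?_ ?_)
      · calc |∑ x', (That x a x' - T x a x') * Vrec T r Q π γ m x'|
            ≤ ∑ x', |(That x a x' - T x a x') * Vrec T r Q π γ m x'| :=
              Finset.abs_sum_le_sum_abs _ _
          _ ≤ ∑ x', |That x a x' - T x a x'| * (1 / (1 - γ)) := by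
              refine Finset.sum_le_sum fun x' _ => ?_
              rw [abs_mul]
              exact mul_le_mul_of_nonneg_left
                (by rw [abs_of_nonneg (hVb x').1]; exact (hVb x').2) (abs_nonneg _)
          _ = (∑ x', |That x a x' - T x a x'|) * (1 / (1 - γ)) := by
              rw [Finset.sum_mul]
          _ ≤ eT * (1 / (1 - γ)) := by
              refine mul_le_mul_of_nonneg_right ?_ (by positivity)
              calc (∑ x', |That x a x' - T x a x'|)
                  = ∑ x', |T x a x' - That x a x'| := by
                    exact Finset.sum_congr rfl fun x' _ => abs_sub_comm _ _
                _ ≤ eT := herrT x a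
      · calc |∑ x', That x a x' * (Vrec That rhat Qhat π γ m x' - Vrec T r Q π γ m x')|
            ≤ ∑ x', |That x a x' * (Vrec That rhat Qhat π γ m x' - Vrec T r Q π γ m x')| :=
              Finset.abs_sum_le_sum_abs _ _
          _ ≤ ∑ x', That x a x' * Bm := by
              refine Finset.sum_le_sum fun x' _ => ?_
              rw [abs_mul, abs_of_nonneg (hThat0 x a x')]
              exact mul_le_mul_of_nonneg_left (ih x') (hThat0 x a x')
          _ = Bm := by rw [← Finset.sum_mul, hThat1, one_mul]
    have hstep : |Vrec That rhat Qhat π γ (m+1) x - Vrec T r Q π γ (m+1) x| ≤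
        eR + γ * (eT * (1 / (1 - γ)) + Bm) := by
      rw [hdiff]
      calc |∑ a, π x a * ((rhat x a - r x a) +
              γ * ((∑ x', (That x a x' - T x a x') * Vrec T r Q π γ m x') +
                ∑ x', That x a x' *
                  (Vrec That rhat Qhat π γ m x' - Vrec T r Q π γ m x')))|
          ≤ ∑ a, |π x a * ((rhat x a - r x a) +
              γ * ((∑ x', (That x a x' - T x a x') * Vrec T r Q π γ m x') +
                ∑ x', That x a x' *
                  (Vrec That rhat Qhat π γ m x' - Vrec T r Q π γ m x')))| :=
            Finset.abs_sum_le_sum_abs _ _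
        _ ≤ ∑ a, (π x a * |rhat x a - r x a| +
              π x a * (γ * (eT * (1 / (1 - γ)) + Bm))) := by
            refine Finset.sum_le_sum fun a _ => ?_
            rw [abs_mul, abs_of_nonneg (hπ0 x a), ← mul_add]
            refine mul_le_mul_of_nonneg_left ?_ (hπ0 x a)
            refine le_trans (abs_add_le _ _) (add_le_add le_rfl ?_)
            rw [abs_mul, abs_of_nonneg hγ0]
            exact mul_le_mul_of_nonneg_left (hinner a) hγ0
        _ = (∑ a, π x a * |rhat x a - r x a|) +
              (∑ a, π x a) * (γ * (eT * (1 / (1 - γ)) + Bm)) := by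
            rw [Finset.sum_add_distrib, Finset.sum_mul]
        _ ≤ eR + 1 * (γ * (eT * (1 / (1 - γ)) + Bm)) := by
            refine add_le_add ?_ ?_
            · calc ∑ a, π x a * |rhat x a - r x a|
                  ≤ ∑ a, |rhat x a - r x a| := by
                    refine Finset.sum_le_sum fun a _ => ?_
                    refine mul_le_of_le_one_left (abs_nonneg _) ?_
                    calc π x a ≤ ∑ b, π x b :=
                          Finset.single_le_sum (fun b _ => hπ0 x b) (Finset.mem_univ a)
                      _ = 1 := hπ1 x
                _ = ∑ a, |r x a - rhat x a| :=
                    Finset.sum_congr rfl fun a _ => abs_sub_comm _ _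
                _ ≤ eR := herrR x
            · rw [hπ1 x]
        _ = eR + γ * (eT * (1 / (1 - γ)) + Bm) := by ring
    refine le_trans hstep (le_of_eq ?_)
    rw [hBm]
    field_simp
    ring
end GatsAux

theorem gats_model_based_model_free_tradeoff {X A : Type*}
    [Fintype X] [Fintype A] [Nonempty X] [Nonempty A]
    (γ : ℝ) (hγ0 : 0 ≤ γ) (hγ1 : γ < 1)
    (T That : X → A → X → ℝ) (r rhat : X → A → ℝ) (Q Qhat : X → A → ℝ)
    (eT eR eQ : ℝ) (heT : 0 ≤ eT) (heR : 0 ≤ eR) (heQ : 0 ≤ eQ)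
    (hT0 : ∀ x a x', 0 ≤ T x a x') (hT1 : ∀ x a, ∑ x', T x a x' = 1)
    (hThat0 : ∀ x a x', 0 ≤ That x a x') (hThat1 : ∀ x a, ∑ x', That x a x' = 1)
    (hr : ∀ x a, 0 ≤ r x a ∧ r x a ≤ 1)
    (hQ : ∀ x a, 0 ≤ Q x a ∧ Q x a ≤ 1 / (1 - γ))
    (herrQ : ∀ x a, |Q x a - Qhat x a| ≤ eQ)
    (herrR : ∀ x : X, ∑ a, |r x a - rhat x a| ≤ eR)
    (herrT : ∀ x a, ∑ x', |T x a x' - That x a x'| ≤ eT)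
    (π : X → A → ℝ) (hπ0 : ∀ x a, 0 ≤ π x a) (hπ1 : ∀ x, ∑ a, π x a = 1)
    (H : ℕ) (hH : 1 ≤ H) (x : X) :
    |gatsReturn That rhat Qhat π γ H x - gatsReturn T r Q π γ H x| ≤
      (1 - γ ^ H + (H : ℝ) * γ ^ H * (1 - γ)) / (1 - γ) ^ 2 * eT +
        (1 - γ ^ H) / (1 - γ) * eR + γ ^ H * eQ := by
  rw [GatsAux.gats_eq_Vrec That rhat Qhat π γ hThat1 hπ1 H x,
      GatsAux.gats_eq_Vrec T r Q π γ hT1 hπ1 H x]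
  refine le_trans (GatsAux.Vrec_err T r Q π γ That rhat Qhat eT eR eQ hγ0 hγ1 heT heR heQ
    hT0 hT1 hThat0 hThat1 hr hQ herrQ herrR herrT hπ0 hπ1 H x) ?_
  have h1γ : (0:ℝ) < 1 - γ := by linarith
  have hgH0 : (0:ℝ) ≤ γ ^ H := pow_nonneg hγ0 H
  have hgH1 : γ ^ H ≤ 1 := pow_le_one₀ hγ0 (le_of_lt hγ1)
  have expand : (1 - γ ^ H) / (1 - γ) * (eR + γ / (1 - γ) * eT) + γ ^ H * eQ =
      (1 - γ ^ H) * γ / (1 - γ) ^ 2 * eT + (1 - γ ^ H) / (1 - γ) * eR + γ ^ H * eQ := by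
    field_simp
    ring
  rw [expand]
  have hnum : (1 - γ ^ H) * γ ≤ 1 - γ ^ H + (H : ℝ) * γ ^ H * (1 - γ) := by
    nlinarith [mul_nonneg (by linarith : (0:ℝ) ≤ 1 - γ) (by linarith : (0:ℝ) ≤ 1 - γ ^ H),
      mul_nonneg (mul_nonneg (Nat.cast_nonneg H) hgH0) (by linarith : (0:ℝ) ≤ 1 - γ)]
  have key : (1 - γ ^ H) * γ / (1 - γ) ^ 2 * eT ≤
      (1 - γ ^ H + (H : ℝ) * γ ^ H * (1 - γ)) / (1 - γ) ^ 2 * eT :=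
    mul_le_mul_of_nonneg_right ((div_le_div_iff_of_pos_right (pow_pos h1γ 2)).mpr hnum) heT
  linarith
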